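/- Fix integers b > a ≥ 1 and let g := gcd(a, b). For every positive integer n, the set T_n of all even subpowers of b/g that lie in {1, ..., n} is an {a,b}-multiplicative set, and it has maximum cardinality among all {a,b}-multiplicative subsets of {1, ..., n}. -/

import Mathlib

/-- `S` is `{a,b}`-multiplicative: `a*x ≠ b*y` for all `x, y ∈ S`. -/
def MulSidonPair (a b : ℕ) (S : Set ℕ) : Prop :=
  ∀ x ∈ S, ∀ y ∈ S, a * x ≠ b * y

/-- `x` is an `i`-th subpower of `b`: `x = b^i * y` for some `y ≥ 1` with `b ∤ y`. -/
def IsSubpower (b i x : ℕ) : Prop :=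
  ∃ y : ℕ, 0 < y ∧ ¬ b ∣ y ∧ x = b ^ i * y

/-- `x` is an even subpower of `b`. -/
def IsEvenSubpower (b x : ℕ) : Prop :=
  ∃ i : ℕ, Even i ∧ IsSubpower b i x

attribute [local instance] Classical.propDecidable

lemma subpower_exists (b : ℕ) (hb : 2 ≤ b) :
    ∀ x : ℕ, 0 < x → ∃ i, IsSubpower b i x := by
  intro x
  induction x using Nat.strong_induction_on with
  | _ x ih =>
    intro hx
    by_cases h : b ∣ x
    · obtain ⟨c, rfl⟩ := h
      have hc : 0 < c := Nat.pos_of_ne_zero (by rintro rfl; simp at hx)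
      have hlt : c < b * c := by nlinarith
      obtain ⟨i, y, hy, hnd, hxy⟩ := ih c hlt hc
      exact ⟨i + 1, y, hy, hnd, by rw [hxy]; ring⟩
    · exact ⟨0, x, hx, h, by simp⟩

lemma subpower_unique (b : ℕ) (hb : 2 ≤ b) {i j x : ℕ}
    (hi : IsSubpower b i x) (hj : IsSubpower b j x) : i = j := by
  obtain ⟨u, hu, hbu, hxu⟩ := hi
  obtain ⟨v, hv, hbv, hxv⟩ := hj
  by_contra hne
  wlog hij : i < j generalizing i j u v
  · exact this v hv hbv hxv u hu hbu hxu (Ne.symm hne) (by omega)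
  have hbpos : 0 < b ^ i := Nat.pow_pos (by omega)
  have : b ^ i * u = b ^ i * (b ^ (j - i) * v) := by
    rw [← hxu, hxv, ← mul_assoc, ← pow_add]
    congr 2
    omega
  have hu' : u = b ^ (j - i) * v := Nat.eq_of_mul_eq_mul_left hbpos this
  apply hbu
  obtain ⟨k, hk⟩ : ∃ k, j - i = k + 1 := ⟨j - i - 1, by omega⟩
  exact ⟨b ^ k * v, by rw [hu', hk, pow_succ]; ring⟩

theorem stmt0 (a b : ℕ) (ha : 1 ≤ a) (hab : a < b) (n : ℕ) (hn : 1 ≤ n) :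
    MulSidonPair a b
      ↑((Finset.Icc 1 n).filter (IsEvenSubpower (b / Nat.gcd a b))) ∧
    ∀ S : Finset ℕ, ↑S ⊆ Set.Icc 1 n → MulSidonPair a b ↑S →
      S.card ≤ ((Finset.Icc 1 n).filter (IsEvenSubpower (b / Nat.gcd a b))).card := by
  set g := Nat.gcd a b with hgdef
  set a' := a / g with ha'def
  set b' := b / g with hb'def
  have hg : 0 < g := Nat.gcd_pos_of_pos_left _ (by omega)
  have haa : a = g * a' := (Nat.mul_div_cancel' (Nat.gcd_dvd_left a b)).symm
  have hbb : b = g * b' := (Nat.mul_div_cancel' (Nat.gcd_dvd_right a b)).symm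
  have hcop : Nat.Coprime a' b' := Nat.coprime_div_gcd_div_gcd hg
  have ha1 : 1 ≤ a' := Nat.div_pos (Nat.le_of_dvd (by omega) (Nat.gcd_dvd_left a b)) hg
  have hab' : a' < b' := by
    have h := hab
    rw [haa, hbb] at h
    exact Nat.lt_of_mul_lt_mul_left h
  have hb2 : 2 ≤ b' := by omega
  have hb'pos : 0 < b' := by omega
  -- key reduction
  have key : ∀ x y : ℕ, a * x = b * y ↔ a' * x = b' * y := by
    intro x y
    constructor <;> intro h
    · have : g * (a' * x) = g * (b' * y) := by
        rw [← mul_assoc, ← mul_assoc, ← haa, ← hbb]; exact h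
      exact Nat.eq_of_mul_eq_mul_left hg this
    · rw [haa, hbb, mul_assoc, mul_assoc, h]
  -- structure of non-even-subpowers
  have oddpart : ∀ x : ℕ, 0 < x → ¬ IsEvenSubpower b' x →
      b' ∣ x ∧ IsEvenSubpower b' (a' * (x / b')) ∧ b' * (a' * (x / b')) = a' * x := by
    intro x hx hnev
    obtain ⟨i, hi⟩ := subpower_exists b' hb2 x hx
    have hiodd : ¬ Even i := fun h => hnev ⟨i, h, hi⟩
    have hi0 : i ≠ 0 := by rintro rfl; exact hiodd Even.zero
    obtain ⟨k, rfl⟩ : ∃ k, i = k + 1 := ⟨i - 1, by omega⟩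
    have hkev : Even k := by
      rcases Nat.even_or_odd k with h | h
      · exact h
      · exact absurd (Odd.add_one h) hiodd
    obtain ⟨u, hu, hbu, hxu⟩ := hi
    have hdvd : b' ∣ x := ⟨b' ^ k * u, by rw [hxu, pow_succ]; ring⟩
    have hdiv : x / b' = b' ^ k * u := by
      rw [hxu, pow_succ]
      rw [show b' ^ k * b' * u = b' * (b' ^ k * u) by ring]
      exact Nat.mul_div_cancel_left _ hb'pos
    refine ⟨hdvd, ⟨k, hkev, a' * u, by positivity, ?_, by rw [hdiv]; ring⟩, ?_⟩
    · intro hd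
      exact hbu (hcop.symm.dvd_of_dvd_mul_left hd)
    · rw [hdiv, hxu, pow_succ]; ring
  constructor
  · -- the filtered set is Sidon
    intro x hx y hy hxy
    simp only [Finset.coe_filter, Set.mem_setOf_eq, Finset.mem_Icc] at hx hy
    obtain ⟨-, i, hiev, u, hu, hbu, hxu⟩ := hx
    obtain ⟨-, j, hjev, v, hv, hbv, hyv⟩ := hy
    have h' : a' * x = b' * y := (key x y).1 hxy
    rw [hxu, hyv] at h'
    rcases le_or_gt i j with hij | hij
    · have hp : b' ^ i * b' ^ (j + 1 - i) = b' ^ (j + 1) := by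
        rw [← pow_add]; congr 1; omega
      have : b' ^ i * (a' * u) = b' ^ i * (b' ^ (j + 1 - i) * v) := by
        calc b' ^ i * (a' * u) = a' * (b' ^ i * u) := by ring
          _ = b' * (b' ^ j * v) := h'
          _ = b' ^ (j + 1) * v := by rw [pow_succ]; ring
          _ = b' ^ i * (b' ^ (j + 1 - i) * v) := by rw [← hp]; ring
      have heq : a' * u = b' ^ (j + 1 - i) * v :=
        Nat.eq_of_mul_eq_mul_left (Nat.pow_pos hb'pos) this
      obtain ⟨k, hk⟩ : ∃ k, j + 1 - i = k + 1 := ⟨j - i, by omega⟩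
      have : b' ∣ a' * u := ⟨b' ^ k * v, by rw [heq, hk, pow_succ]; ring⟩
      exact hbu (hcop.symm.dvd_of_dvd_mul_left this)
    · have hj2 : j + 2 ≤ i := by
        rcases hiev with ⟨p, hp⟩; rcases hjev with ⟨q, hq⟩; omega
      have : b' ^ (j + 1) * (a' * (b' ^ (i - (j + 1)) * u)) = b' ^ (j + 1) * v := by
        rw [show b' ^ (j+1) * (a' * (b' ^ (i - (j+1)) * u)) = a' * (b' ^ ((j+1) + (i - (j+1))) * u) by rw [pow_add]; ring]
        rw [show (j + 1) + (i - (j + 1)) = i by omega]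
        rw [h', pow_succ]; ring
      have heq : a' * (b' ^ (i - (j + 1)) * u) = v :=
        Nat.eq_of_mul_eq_mul_left (Nat.pow_pos hb'pos) this
      apply hbv
      obtain ⟨k, hk⟩ : ∃ k, i - (j + 1) = k + 1 := ⟨i - j - 2, by omega⟩
      exact ⟨a' * (b' ^ k * u), by rw [← heq, hk, pow_succ]; ring⟩
  · -- maximality
    intro S hS hSid
    apply Finset.card_le_card_of_injOn
      (fun x => if IsEvenSubpower b' x then x else a' * (x / b'))
    · intro x hxS
      have hx := hS hxS
      simp only [Set.mem_Icc] at hx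
      by_cases hev : IsEvenSubpower b' x
      · simp only [hev, if_pos]
        simp only [Finset.mem_coe, Finset.mem_filter, Finset.mem_Icc]
        exact ⟨⟨hx.1, hx.2⟩, hev⟩
      · simp only [hev, if_neg, not_false_iff]
        obtain ⟨hdvd, hev', heq⟩ := oddpart x (by omega) hev
        simp only [Finset.mem_coe, Finset.mem_filter, Finset.mem_Icc]
        obtain ⟨c, hc⟩ := hdvd
        have hdivc : x / b' = c := by rw [hc, Nat.mul_div_cancel_left _ hb'pos]
        have hpos : 0 < a' * (x / b') := by
          obtain ⟨i, -, u, hu, -, hxu⟩ := hev'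
          rw [hxu]; positivity
        have hle : a' * (x / b') ≤ n := by
          rw [hdivc]
          calc a' * c ≤ b' * c := Nat.mul_le_mul hab'.le le_rfl
            _ = x := hc.symm
            _ ≤ n := hx.2
        exact ⟨⟨hpos, hle⟩, hev'⟩
    · intro x hxS y hyS hxy
      simp only at hxy
      by_cases hx : IsEvenSubpower b' x <;> by_cases hy : IsEvenSubpower b' y <;>
        simp only [hx, hy, if_pos, if_neg, not_false_iff] at hxy
      · exact hxy
      · -- x even, y not : x = a' * (y / b')
        exfalso
        have hy1 : (1 : ℕ) ≤ y := (hS hyS).1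
        obtain ⟨hdvd, -, heq⟩ := oddpart y (by omega) hy
        rw [← hxy] at heq
        exact hSid y hyS x hxS ((key y x).2 heq.symm)
      · exfalso
        have hx1 : (1 : ℕ) ≤ x := (hS hxS).1
        obtain ⟨hdvd, -, heq⟩ := oddpart x (by omega) hx
        rw [hxy] at heq
        exact hSid x hxS y hyS ((key x y).2 heq.symm)
      · have hx1 : (1 : ℕ) ≤ x := (hS hxS).1
        have hy1 : (1 : ℕ) ≤ y := (hS hyS).1
        obtain ⟨hdx, -, -⟩ := oddpart x (by omega) hx
        obtain ⟨hdy, -, -⟩ := oddpart y (by omega) hy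
        have : x / b' = y / b' := Nat.eq_of_mul_eq_mul_left (by omega) hxy
        obtain ⟨cx, rfl⟩ := hdx
        obtain ⟨cy, rfl⟩ := hdy
        rw [Nat.mul_div_cancel_left _ hb'pos, Nat.mul_div_cancel_left _ hb'pos] at this
        rw [this]
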